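/- Let φ(x,y) = (x^s − y^r)^k P(x,y) with r, s ≥ 2, k ≥ 2. Then, after factoring (x^s − y^r)^{2k−4} out of det D²φ, the constant term (coefficient of (x^s − y^r)^0) in the remaining expression vanishes, and the coefficient of (x^s − y^r)^1 equals (k−1) k² r s y^{r−2} x^{s−2} P(x,y)² (s x^s − r y^r − r s x^s + r s y^r). -/

import Mathlib

noncomputable def pdx (f : ℝ → ℝ → ℝ) : ℝ → ℝ → ℝ := fun x y => deriv (fun t => f t y) x
noncomputable def pdy (f : ℝ → ℝ → ℝ) : ℝ → ℝ → ℝ := fun x y => deriv (fun t => f x t) y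
noncomputable def hessDet (f : ℝ → ℝ → ℝ) : ℝ → ℝ → ℝ :=
  fun x y => pdx (pdx f) x y * pdy (pdy f) x y - (pdy (pdx f) x y) ^ 2

open MvPolynomial in
lemma hasDerivAt_eval_fst (y : ℝ) (Q : MvPolynomial (Fin 2) ℝ) (x : ℝ) :
    HasDerivAt (fun t => eval ![t, y] Q) (eval ![x, y] (pderiv 0 Q)) x := by
  induction Q using MvPolynomial.induction_on with
  | C a => simpa using hasDerivAt_const x a
  | add p q hp hq => simpa using hp.fun_add hq
  | mul_X p i hp =>
    fin_cases i
    · simpa [pderiv_mul, mul_comm, add_comm] using hp.fun_mul (hasDerivAt_id x)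
    · simpa [pderiv_mul, pderiv_X_of_ne, mul_comm] using hp.mul_const y

open MvPolynomial in
lemma hasDerivAt_eval_snd (x : ℝ) (Q : MvPolynomial (Fin 2) ℝ) (y : ℝ) :
    HasDerivAt (fun t => eval ![x, t] Q) (eval ![x, y] (pderiv 1 Q)) y := by
  induction Q using MvPolynomial.induction_on with
  | C a => simpa using hasDerivAt_const y a
  | add p q hp hq => simpa using hp.fun_add hq
  | mul_X p i hp =>
    fin_cases i
    · simpa [pderiv_mul, pderiv_X_of_ne, mul_comm] using hp.mul_const x
    · simpa [pderiv_mul, mul_comm, add_comm] using hp.fun_mul (hasDerivAt_id y)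

open MvPolynomial in
lemma pdx_eval (Q : MvPolynomial (Fin 2) ℝ) :
    pdx (fun x y => eval ![x, y] Q) = fun x y => eval ![x, y] (pderiv 0 Q) := by
  funext x y
  exact (hasDerivAt_eval_fst y Q x).deriv

open MvPolynomial in
lemma pdy_eval (Q : MvPolynomial (Fin 2) ℝ) :
    pdy (fun x y => eval ![x, y] Q) = fun x y => eval ![x, y] (pderiv 1 Q) := by
  funext x y
  exact (hasDerivAt_eval_snd x Q y).deriv

open MvPolynomial in
lemma hessDet_eval (Q : MvPolynomial (Fin 2) ℝ) (x y : ℝ) :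
    hessDet (fun x y => eval ![x, y] Q) x y
      = eval ![x, y] (pderiv 0 (pderiv 0 Q)) * eval ![x, y] (pderiv 1 (pderiv 1 Q))
        - (eval ![x, y] (pderiv 1 (pderiv 0 Q))) ^ 2 := by
  unfold hessDet
  rw [pdx_eval, pdx_eval, pdy_eval, pdy_eval, pdy_eval]

open MvPolynomial in
lemma pderiv_natCast' {i : Fin 2} {n : ℕ} : pderiv i (n : MvPolynomial (Fin 2) ℝ) = 0 := by
  rw [← map_natCast (C : ℝ →+* MvPolynomial (Fin 2) ℝ) n, pderiv_C]

open MvPolynomial in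
theorem hessian_det_expansion_in_curve_factor
    (k r s : ℕ) (hk : 2 ≤ k) (hr : 2 ≤ r) (hs : 2 ≤ s)
    (P : MvPolynomial (Fin 2) ℝ) :
    ∃ E2 : MvPolynomial (Fin 2) ℝ, ∀ x y : ℝ,
      hessDet (fun x y => (x ^ s - y ^ r) ^ k * eval ![x, y] P) x y
        = (x ^ s - y ^ r) ^ (2 * k - 4) *
            ((x ^ s - y ^ r) *
                (((k : ℝ) - 1) * (k : ℝ) ^ 2 * (r : ℝ) * (s : ℝ) * y ^ (r - 2) * x ^ (s - 2)
                  * (eval ![x, y] P) ^ 2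
                  * ((s : ℝ) * x ^ s - (r : ℝ) * y ^ r
                      - (r : ℝ) * (s : ℝ) * x ^ s + (r : ℝ) * (s : ℝ) * y ^ r))
              + (x ^ s - y ^ r) ^ 2 * eval ![x, y] E2) := by
  set u : MvPolynomial (Fin 2) ℝ := X 0 ^ s - X 1 ^ r with hu
  set Aa : MvPolynomial (Fin 2) ℝ := C (s : ℝ) * X 0 ^ (s - 1) with hAa
  set A' : MvPolynomial (Fin 2) ℝ := C ((s : ℝ) * ((s : ℝ) - 1)) * X 0 ^ (s - 2) with hA'
  set Bb : MvPolynomial (Fin 2) ℝ := - (C (r : ℝ) * X 1 ^ (r - 1)) with hBb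
  set B' : MvPolynomial (Fin 2) ℝ := - (C ((r : ℝ) * ((r : ℝ) - 1)) * X 1 ^ (r - 2)) with hB'
  set P0 : MvPolynomial (Fin 2) ℝ := pderiv 0 P with hP0
  set P1 : MvPolynomial (Fin 2) ℝ := pderiv 1 P with hP1
  set P00 : MvPolynomial (Fin 2) ℝ := pderiv 0 P0 with hP00
  set P11 : MvPolynomial (Fin 2) ℝ := pderiv 1 P1 with hP11
  set P01 : MvPolynomial (Fin 2) ℝ := pderiv 1 P0 with hP01
  set K : MvPolynomial (Fin 2) ℝ := C (k : ℝ) with hK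
  set K1 : MvPolynomial (Fin 2) ℝ := C ((k : ℝ) - 1) with hK1
  refine ⟨K * (A' * P + 2 * Aa * P0) * (K * (B' * P + 2 * Bb * P1))
      + K * K1 * Aa ^ 2 * P * P11 + K * K1 * Bb ^ 2 * P * P00
      - (K * (Aa * P1 + Bb * P0)) ^ 2 - 2 * (K * K1 * Aa * Bb * P) * P01
      + u * (K * (A' * P + 2 * Aa * P0) * P11 + K * (B' * P + 2 * Bb * P1) * P00
          - 2 * (K * (Aa * P1 + Bb * P0)) * P01)
      + u ^ 2 * (P00 * P11 - P01 ^ 2), ?_⟩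
  intro x y
  obtain ⟨k, rfl⟩ := Nat.exists_eq_add_of_le' hk
  obtain ⟨r, rfl⟩ := Nat.exists_eq_add_of_le' hr
  obtain ⟨s, rfl⟩ := Nat.exists_eq_add_of_le' hs
  have hΦ : (fun x y : ℝ => (x ^ (s + 2) - y ^ (r + 2)) ^ (k + 2) * eval ![x, y] P)
      = fun x y : ℝ => eval ![x, y] (u ^ (k + 2) * P) := by
    funext x y
    simp [hu]
  rw [hΦ, hessDet_eval]
  simp only [hu, hAa, hA', hBb, hB', hK, hK1, hP00, hP11, hP01, hP0, hP1,
    pderiv_mul, pderiv_pow, map_sub, map_add, map_mul, map_pow, map_neg, pderiv_X_self,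
    pderiv_X_of_ne (by decide : (0 : Fin 2) ≠ 1), pderiv_X_of_ne (by decide : (1 : Fin 2) ≠ 0),
    pderiv_C, pderiv_natCast', pderiv_one, map_zero, map_one, map_ofNat, eval_mul, eval_add, eval_sub, eval_pow, eval_X, eval_C, map_natCast, eval_neg,
    Matrix.cons_val_zero, Matrix.cons_val_one, Matrix.head_cons,
    show k + 2 - 1 = k + 1 from rfl, show k + 1 - 1 = k from rfl,
    show s + 2 - 1 = s + 1 from rfl, show s + 1 - 1 = s from rfl,
    show r + 2 - 1 = r + 1 from rfl, show r + 1 - 1 = r from rfl,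
    show s + 2 - 2 = s from rfl, show r + 2 - 2 = r from rfl,
    show 2 * (k + 2) - 4 = 2 * k from by omega]
  rw [show ((k + 1 : ℕ) : ℝ) = ((k + 2 : ℕ) : ℝ) - 1 by push_cast; ring,
    show ((s + 1 : ℕ) : ℝ) = ((s + 2 : ℕ) : ℝ) - 1 by push_cast; ring,
    show ((r + 1 : ℕ) : ℝ) = ((r + 2 : ℕ) : ℝ) - 1 by push_cast; ring]
  ring
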